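/- Suppose κ_1 ≤ κ_2 ≤ ... ≤ κ_n are reals with H = ∑_i κ_i > 0 and H_2(κ) > 0, and let i_0 be an index such that κ_{i_0} ≤ 0 or i_0 = 1 (i.e., κ_{i_0} is negative or the smallest component). Then, with F_i = H − κ_i, one has ∑_{i=1}^n F_i κ_i^2 ≥ (1/n) (∑_{i=1}^n F_i) κ_{i_0}^2. -/

import Mathlib

theorem sum_Fi_kappa_sq_ge (n : ℕ) (hn : 2 ≤ n) (κ : Fin n → ℝ)
    (hmono : Monotone κ)
    (hH : 0 < ∑ i, κ i)
    (hH2 : 0 < (1 / 2) * ((∑ i, κ i) ^ 2 - ∑ i, (κ i) ^ 2))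
    (i₀ : Fin n) (hi₀ : κ i₀ ≤ 0 ∨ i₀ = ⟨0, by omega⟩) :
    (1 / (n : ℝ)) * (∑ i, ((∑ j, κ j) - κ i)) * (κ i₀) ^ 2 ≤
      ∑ i, ((∑ j, κ j) - κ i) * (κ i) ^ 2 := by
  set H := ∑ j, κ j with hHdef
  set z : Fin n := ⟨0, by omega⟩ with hz
  have hF : ∀ i, 0 < H - κ i := by
    intro i
    have h1 : (κ i) ^ 2 ≤ ∑ j, (κ j) ^ 2 :=
      Finset.single_le_sum (fun j _ => sq_nonneg (κ j)) (Finset.mem_univ i)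
    nlinarith [hH2, hH, h1]
  have h0 : ∀ i : Fin n, κ z ≤ κ i := fun i => hmono (Fin.le_def.mpr (Nat.zero_le _))
  have hsq : (κ i₀) ^ 2 ≤ (κ z) ^ 2 := by
    rcases hi₀ with h | h
    · nlinarith [h0 i₀]
    · rw [h]
  have hS0 : 0 ≤ ∑ i, (H - κ i) :=
    Finset.sum_nonneg fun i _ => (hF i).le
  have hSle : ∑ i, (H - κ i) ≤ (n : ℝ) * (H - κ z) := by
    have := Finset.sum_le_card_nsmul Finset.univ (fun i => H - κ i) (H - κ z)
      (fun i _ => by linarith [h0 i])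
    simpa [Finset.card_univ, nsmul_eq_mul] using this
  have hsum_ge : (H - κ z) * (κ z) ^ 2 ≤ ∑ i, (H - κ i) * (κ i) ^ 2 :=
    Finset.single_le_sum (fun i _ => mul_nonneg (hF i).le (sq_nonneg _))
      (Finset.mem_univ z)
  have hn' : (0 : ℝ) < n := by positivity
  have step1 : (1 / (n : ℝ)) * (∑ i, (H - κ i)) * (κ i₀) ^ 2 ≤
      (1 / (n : ℝ)) * (∑ i, (H - κ i)) * (κ z) ^ 2 := by
    apply mul_le_mul_of_nonneg_left hsq
    positivity
  have step2 : (1 / (n : ℝ)) * (∑ i, (H - κ i)) * (κ z) ^ 2 ≤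
      (1 / (n : ℝ)) * ((n : ℝ) * (H - κ z)) * (κ z) ^ 2 := by
    apply mul_le_mul_of_nonneg_right _ (sq_nonneg _)
    apply mul_le_mul_of_nonneg_left hSle
    positivity
  have step3 : (1 / (n : ℝ)) * ((n : ℝ) * (H - κ z)) * (κ z) ^ 2 =
      (H - κ z) * (κ z) ^ 2 := by
    field_simp
  linarith
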